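/- If a connected graph G is (s,s−1)-dismantlable for an integer s ≥ 1, then G does not contain an isometrically embedded 2s × 2s square grid; that is, there is no map φ from {0,1,…,2s} × {0,1,…,2s} to the vertex set of G such that d_G(φ(a), φ(b)) = |a₁ − b₁| + |a₂ − b₂| for all a = (a₁,a₂) and b = (b₁,b₂). -/

import Mathlib

open SimpleGraph

variable {V : Type*}

/-- The ball of (real) radius `r` around `v` in `G` (w.r.t. the graph distance). -/
def gBall (G : SimpleGraph V) (v : V) (r : ℝ) : Set V :=
  {x : V | (G.dist v x : ℝ) ≤ r}

/-- The interval `I(u,v)`: vertices lying on shortest `(u,v)`-paths. -/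
def gInterval (G : SimpleGraph V) (u v : V) : Set V :=
  {x : V | G.dist u x + G.dist x v = G.dist u v}

/-- Gromov `δ`-hyperbolicity via the four-point condition. -/
def IsHyperbolic {W : Type*} (G : SimpleGraph W) (δ : ℝ) : Prop :=
  ∀ u v x y : W,
    (G.dist u v : ℝ) + (G.dist x y : ℝ) ≤
      max ((G.dist u x : ℝ) + (G.dist v y : ℝ)) ((G.dist u y : ℝ) + (G.dist v x : ℝ)) + 2 * δ

/-- `(s,s')*`-dismantlability: there is a well-order `lt` on the vertices such that every
vertex `v` which is not the least element is eliminated by some earlier vertex `u`,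
i.e. `B_s(v) ∩ X_v ⊆ B_{s'}(u)` where `X_v = {w : w ⪯ v}`. -/
def StarDismantlable (G : SimpleGraph V) (s s' : ℝ) : Prop :=
  ∃ lt : V → V → Prop, IsWellOrder V lt ∧
    ∀ v : V, (∃ w : V, lt w v) →
      ∃ u : V, lt u v ∧ gBall G v s ∩ {w : V | lt w v ∨ w = v} ⊆ gBall G u s'

/-- The ball of radius `r` around `v` in the subgraph of `G` induced on `V \ {u}`. -/
def gBallRemove (G : SimpleGraph V) (u v : V) (r : ℝ) : Set V :=
  {x : V | ∃ (hv : v ∈ {w : V | w ≠ u}) (hx : x ∈ {w : V | w ≠ u}),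
    (G.induce {w : V | w ≠ u}).Reachable ⟨v, hv⟩ ⟨x, hx⟩ ∧
    ((G.induce {w : V | w ≠ u}).dist ⟨v, hv⟩ ⟨x, hx⟩ : ℝ) ≤ r}

/-- `(s,s')`-dismantlability: there is a well-order `lt` on the vertices such that every
vertex `v` which is not the least element is eliminated by an earlier vertex `u`, i.e.
`B_s(v, G−u) ∩ X_v ⊆ B_{s'}(u)`. -/
def Dismantlable (G : SimpleGraph V) (s s' : ℝ) : Prop :=
  ∃ lt : V → V → Prop, IsWellOrder V lt ∧
    ∀ v : V, (∃ w : V, lt w v) →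
      ∃ u : V, lt u v ∧ gBallRemove G u v s ∩ {w : V | lt w v ∨ w = v} ⊆ gBall G u s'

/-- Weak modularity: the triangle and quadrangle conditions. -/
def WeaklyModular (G : SimpleGraph V) : Prop :=
  (∀ u v w : V, G.dist v w = 1 → 1 < G.dist u v → G.dist u v = G.dist u w →
    ∃ x : V, G.Adj v x ∧ G.Adj w x ∧ G.dist u x + 1 = G.dist u v) ∧
  (∀ u v w z : V, G.dist v z = 1 → G.dist w z = 1 → G.dist v w = 2 →
    2 ≤ G.dist u v → G.dist u v = G.dist u w → G.dist u z = G.dist u v + 1 →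
    ∃ x : V, G.Adj v x ∧ G.Adj w x ∧ G.dist u x + 1 = G.dist u v)

/-- `u`, `v`, `w` form a metric triangle: the pairwise intervals intersect only in the
common end-vertices. -/
def MetricTriangle (G : SimpleGraph V) (u v w : V) : Prop :=
  gInterval G u v ∩ gInterval G v w = {v} ∧
  gInterval G v w ∩ gInterval G w u = {w} ∧
  gInterval G w u ∩ gInterval G u v = {u}

lemma segWalk {W : Type*} (G' : SimpleGraph W) (g : ℕ → W) :
    ∀ k : ℕ, (∀ m, m < k → G'.Adj (g m) (g (m+1))) →
      ∃ w : G'.Walk (g 0) (g k), w.length = k := by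
  intro k
  induction k with
  | zero => exact fun _ => ⟨Walk.nil, rfl⟩
  | succ n ih =>
    intro h
    obtain ⟨w, hw⟩ := ih (fun m hm => h m (by omega))
    exact ⟨w.concat (h n (by omega)), by simp [Walk.length_concat, hw]⟩

lemma reach_aux (G : SimpleGraph V) (u : V) (g : ℕ → V) (k : ℕ)
    (hadj : ∀ m, m < k → G.Adj (g m) (g (m+1)))
    (hne : ∀ m, m ≤ k → g m ≠ u) :
    g k ∈ gBallRemove G u (g 0) (k : ℝ) := by
  set S : Set V := {w : V | w ≠ u} with hS
  let g' : ℕ → S := fun m => ⟨g (min m k), hne _ (min_le_right _ _)⟩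
  have hadj' : ∀ m, m < k → (G.induce S).Adj (g' m) (g' (m+1)) := by
    intro m hm
    have h1 : min m k = m := by omega
    have h2 : min (m+1) k = m+1 := by omega
    simp only [g', h1, h2, SimpleGraph.induce]
    exact hadj m hm
  obtain ⟨w, hw⟩ := segWalk (G.induce S) g' k hadj'
  have e0 : g' 0 = ⟨g 0, hne 0 (by omega)⟩ := Subtype.ext (by simp [g'])
  have ek : g' k = ⟨g k, hne k le_rfl⟩ := Subtype.ext (by simp [g'])
  let w2 := w.copy e0 ek
  refine ⟨hne 0 (by omega), hne k le_rfl, ⟨w2⟩, ?_⟩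
  have hd := SimpleGraph.dist_le w2
  have hl : w2.length = k := by simp [w2, hw]
  rw [hl] at hd
  exact_mod_cast hd

def finc (s m : ℕ) : Fin (2*s+1) := ⟨min m (2*s), by omega⟩

lemma finc_coe {s m : ℕ} (hm : m ≤ 2*s) : ((finc s m : Fin (2*s+1)) : ℤ) = m := by
  simp [finc, hm]

lemma vmove (G : SimpleGraph V) (s : ℕ)
    (φ : Fin (2*s+1) × Fin (2*s+1) → V)
    (hφ : ∀ a b : Fin (2*s+1) × Fin (2*s+1),
      G.dist (φ a) (φ b) = (((a.1:ℤ) - (b.1:ℤ)).natAbs + ((a.2:ℤ) - (b.2:ℤ)).natAbs))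
    (u : V) (a1 a2 x2 : ℕ) (ha1 : a1 ≤ 2*s) (ha2 : a2 ≤ 2*s) (hx2 : x2 ≤ 2*s)
    (hlen : x2 = a2 + s ∨ a2 = x2 + s)
    (havoid : ∀ m : ℕ, m ≤ 2*s → φ (finc s a1, finc s m) ≠ u) :
    φ (finc s a1, finc s x2) ∈ gBallRemove G u (φ (finc s a1, finc s a2)) (s : ℝ) := by
  have hA : ∀ j j' : ℕ, j ≤ 2*s → j' ≤ 2*s → (j' = j+1 ∨ j = j'+1) →
      G.Adj (φ (finc s a1, finc s j)) (φ (finc s a1, finc s j')) := by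
    intro j j' hj hj' hjj
    rw [← SimpleGraph.dist_eq_one_iff_adj, hφ]
    have e1 := finc_coe (s := s) ha1
    have e2 := finc_coe (s := s) hj
    have e3 := finc_coe (s := s) hj'
    simp only [e1, e2, e3]
    omega
  rcases hlen with h | h
  · -- up : x2 = a2 + s
    have := reach_aux G u (fun m => φ (finc s a1, finc s (a2 + min m s))) s
      (by
        intro m hm
        have h1 : min m s = m := by omega
        have h2 : min (m+1) s = m+1 := by omega
        simp only [h1, h2]
        exact hA _ _ (by omega) (by omega) (Or.inl (by omega)))
      (by intro m hm; exact havoid _ (by omega))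
    rw [h]; simpa using this
  · -- down : a2 = x2 + s
    have := reach_aux G u (fun m => φ (finc s a1, finc s (a2 - min m s))) s
      (by
        intro m hm
        have h1 : min m s = m := by omega
        have h2 : min (m+1) s = m+1 := by omega
        simp only [h1, h2]
        exact hA _ _ (by omega) (by omega) (Or.inr (by omega)))
      (by intro m hm; exact havoid _ (by omega))
    simp only [Nat.min_self, Nat.zero_min, Nat.add_zero, Nat.sub_zero] at this
    have e : a2 - s = x2 := by omega
    rwa [e] at this

lemma case2_aux (G : SimpleGraph V) (s : ℕ) (hs : 1 ≤ s)
    (φ : Fin (2*s+1) × Fin (2*s+1) → V)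
    (hφ : ∀ a b : Fin (2*s+1) × Fin (2*s+1),
      G.dist (φ a) (φ b) = (((a.1:ℤ) - (b.1:ℤ)).natAbs + ((a.2:ℤ) - (b.2:ℤ)).natAbs))
    (hinj : Function.Injective φ)
    (u : V) (a1 a2 b1 b2 : ℕ) (ha1 : a1 ≤ 2*s) (ha2 : a2 ≤ 2*s)
    (hb1 : b1 ≤ 2*s) (hb2 : b2 ≤ 2*s)
    (hub : φ (finc s b1, finc s b2) = u)
    (hne : ¬(a1 = b1 ∧ a2 = b2))
    (hd : ((a2:ℤ) - b2).natAbs ≤ ((a1:ℤ) - b1).natAbs)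
    (hball : ∀ p, φ p ∈ gBallRemove G u (φ (finc s a1, finc s a2)) (s:ℝ) →
      (G.dist u (φ p) : ℝ) ≤ (s:ℝ) - 1) : False := by
  have hb1a1 : b1 ≠ a1 := by omega
  obtain ⟨x2, hx2le, hlen⟩ : ∃ x2, x2 ≤ 2*s ∧ (x2 = a2 + s ∨ a2 = x2 + s) := by
    rcases le_or_gt a2 s with h|h
    · exact ⟨a2+s, by omega, Or.inl rfl⟩
    · exact ⟨a2-s, by omega, Or.inr (by omega)⟩
  have havoid : ∀ m : ℕ, m ≤ 2*s → φ (finc s a1, finc s m) ≠ u := by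
    intro m hm h
    rw [← hub] at h
    have h2 := hinj h
    have h3 : (finc s a1).val = (finc s b1).val := by
      rw [congrArg (fun p => (Prod.fst p).val) h2]
    simp only [finc] at h3
    omega
  have hx := vmove G s φ hφ u a1 a2 x2 ha1 ha2 hx2le hlen havoid
  have hdu := hball _ hx
  have hdist : G.dist u (φ (finc s a1, finc s x2)) =
      (((b1:ℤ) - a1).natAbs + ((b2:ℤ) - x2).natAbs : ℕ) := by
    rw [← hub, hφ]
    rw [finc_coe hb1, finc_coe hb2, finc_coe ha1, finc_coe hx2le]
  have hge : s ≤ G.dist u (φ (finc s a1, finc s x2)) := by rw [hdist]; omega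
  have : (s:ℝ) ≤ (G.dist u (φ (finc s a1, finc s x2)) : ℝ) := by exact_mod_cast hge
  linarith

lemma case1_aux (G : SimpleGraph V) (hG : G.Connected) (s : ℕ) (hs : 1 ≤ s)
    (φ : Fin (2*s+1) × Fin (2*s+1) → V)
    (hφ : ∀ a b : Fin (2*s+1) × Fin (2*s+1),
      G.dist (φ a) (φ b) = (((a.1:ℤ) - (b.1:ℤ)).natAbs + ((a.2:ℤ) - (b.2:ℤ)).natAbs))
    (u : V) (a1 a2 : ℕ) (ha1 : a1 ≤ 2*s) (ha2 : a2 ≤ 2*s)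
    (hu : ∀ p, φ p ≠ u)
    (hball : ∀ p, φ p ∈ gBallRemove G u (φ (finc s a1, finc s a2)) (s:ℝ) →
      (G.dist u (φ p) : ℝ) ≤ (s:ℝ) - 1) : False := by
  obtain ⟨x2, hx2le, hlen2⟩ : ∃ x2, x2 ≤ 2*s ∧ (x2 = a2 + s ∨ a2 = x2 + s) := by
    rcases le_or_gt a2 s with h|h
    · exact ⟨a2+s, by omega, Or.inl rfl⟩
    · exact ⟨a2-s, by omega, Or.inr (by omega)⟩
  obtain ⟨x1, hx1le, hlen1⟩ : ∃ x1, x1 ≤ 2*s ∧ (x1 = a1 + s ∨ a1 = x1 + s) := by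
    rcases le_or_gt a1 s with h|h
    · exact ⟨a1+s, by omega, Or.inl rfl⟩
    · exact ⟨a1-s, by omega, Or.inr (by omega)⟩
  have hy := vmove G s φ hφ u a1 a2 x2 ha1 ha2 hx2le hlen2 (fun m _ => hu _)
  let φ' : Fin (2*s+1) × Fin (2*s+1) → V := fun p => φ (p.2, p.1)
  have hφ' : ∀ a b : Fin (2*s+1) × Fin (2*s+1),
      G.dist (φ' a) (φ' b) = (((a.1:ℤ) - (b.1:ℤ)).natAbs + ((a.2:ℤ) - (b.2:ℤ)).natAbs) :=
    fun p q => (hφ (p.2,p.1) (q.2,q.1)).trans (Nat.add_comm _ _)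
  have hx := vmove G s φ' hφ' u a2 a1 x1 ha2 ha1 hx1le hlen1 (fun m _ => hu _)
  have hdx := hball (finc s x1, finc s a2) hx
  have hdy := hball (finc s a1, finc s x2) hy
  have hXY : G.dist (φ (finc s x1, finc s a2)) (φ (finc s a1, finc s x2)) =
      (((x1:ℤ) - a1).natAbs + ((a2:ℤ) - x2).natAbs : ℕ) := by
    rw [hφ, finc_coe hx1le, finc_coe ha2, finc_coe ha1, finc_coe hx2le]
  have h2s : 2*s ≤ G.dist (φ (finc s x1, finc s a2)) (φ (finc s a1, finc s x2)) := by
    rw [hXY]; omega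
  have htri := hG.dist_triangle (u := φ (finc s x1, finc s a2)) (v := u)
    (w := φ (finc s a1, finc s x2))
  rw [SimpleGraph.dist_comm (u := φ (finc s x1, finc s a2)) (v := u)] at htri
  have h1 : (2*s : ℝ) ≤ (G.dist (φ (finc s x1, finc s a2)) (φ (finc s a1, finc s x2)) : ℝ) := by
    exact_mod_cast h2s
  have h2 : (G.dist (φ (finc s x1, finc s a2)) (φ (finc s a1, finc s x2)) : ℝ) ≤
      (G.dist u (φ (finc s x1, finc s a2)) : ℝ) + (G.dist u (φ (finc s a1, finc s x2)) : ℝ) := by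
    exact_mod_cast htri
  have hs1 : (1:ℝ) ≤ (s:ℝ) := by exact_mod_cast hs
  linarith

theorem statement13 (V : Type*) (G : SimpleGraph V) (hG : G.Connected)
    (s : ℕ) (hs : 1 ≤ s)
    (hd : Dismantlable G (s : ℝ) ((s : ℝ) - 1)) :
    ¬ ∃ φ : Fin (2 * s + 1) × Fin (2 * s + 1) → V,
      ∀ a b : Fin (2 * s + 1) × Fin (2 * s + 1),
        G.dist (φ a) (φ b) =
          ((a.1 : ℤ) - (b.1 : ℤ)).natAbs + ((a.2 : ℤ) - (b.2 : ℤ)).natAbs := by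
  rintro ⟨φ, hφ⟩
  have hinj : Function.Injective φ := by
    intro p q h
    have h0 := hφ p q
    rw [h, SimpleGraph.dist_self] at h0
    exact Prod.ext (Fin.ext (by omega)) (Fin.ext (by omega))
  have heta : ∀ p : Fin (2*s+1) × Fin (2*s+1), (finc s p.1.val, finc s p.2.val) = p := by
    intro p
    have h1 := p.1.isLt
    have h2 := p.2.isLt
    exact Prod.ext (Fin.ext (by simp [finc]; omega)) (Fin.ext (by simp [finc]; omega))
  obtain ⟨lt, hwo, helim⟩ := hd
  haveI := hwo
  letI : LinearOrder V := IsWellOrder.linearOrder lt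
  have hltiff : ∀ x y : V, x < y ↔ lt x y := fun _ _ => Iff.rfl
  classical
  set T : Finset V := Finset.image φ Finset.univ with hT
  have hTne : T.Nonempty := ⟨φ (finc s 0, finc s 0), Finset.mem_image_of_mem φ (Finset.mem_univ _)⟩
  set v : V := T.max' hTne with hv
  obtain ⟨a, -, hva⟩ := Finset.mem_image.1 (T.max'_mem hTne)
  have hmax : ∀ p, lt (φ p) v ∨ φ p = v := by
    intro p
    rcases lt_or_eq_of_le (T.le_max' (φ p) (Finset.mem_image_of_mem φ (Finset.mem_univ p))) with h|h
    · exact Or.inl ((hltiff _ _).1 h)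
    · exact Or.inr h
  have hex : ∃ w, lt w v := by
    have hne01 : φ (finc s 0, finc s 0) ≠ φ (finc s 0, finc s 1) := by
      intro h
      have h2 := congrArg (fun p => (Prod.snd p).val) (hinj h)
      simp only [finc] at h2
      omega
    rcases hmax (finc s 0, finc s 0) with h|h
    · exact ⟨_, h⟩
    · rcases hmax (finc s 0, finc s 1) with h'|h'
      · exact ⟨_, h'⟩
      · exact absurd (h.trans h'.symm) hne01
  obtain ⟨u, huv, hsub⟩ := helim v hex
  have hunev : u ≠ v := ne_of_lt ((hltiff u v).2 huv)
  have hballc : ∀ p, φ p ∈ gBallRemove G u v (s:ℝ) → (G.dist u (φ p) : ℝ) ≤ (s:ℝ) - 1 :=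
    fun p hp => hsub ⟨hp, hmax p⟩
  have hcv : φ (finc s a.1.val, finc s a.2.val) = v := by rw [heta a]; exact hva
  have ha1 : a.1.val ≤ 2*s := by have := a.1.isLt; omega
  have ha2 : a.2.val ≤ 2*s := by have := a.2.isLt; omega
  by_cases hur : ∃ b, φ b = u
  · obtain ⟨b, hub⟩ := hur
    have hb1 : b.1.val ≤ 2*s := by have := b.1.isLt; omega
    have hb2 : b.2.val ≤ 2*s := by have := b.2.isLt; omega
    have hab : ¬(a.1.val = b.1.val ∧ a.2.val = b.2.val) := by
      rintro ⟨h1, h2⟩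
      have hab' : a = b := Prod.ext (Fin.ext h1) (Fin.ext h2)
      rw [hab', hub] at hva
      exact hunev hva
    rcases le_or_gt ((a.2.val:ℤ) - b.2.val).natAbs ((a.1.val:ℤ) - b.1.val).natAbs with h|h
    · exact case2_aux G s hs φ hφ hinj u a.1.val a.2.val b.1.val b.2.val ha1 ha2 hb1 hb2
        (by rw [heta b]; exact hub) hab h
        (fun p hp => hballc p (by rwa [hcv] at hp))
    · let φ' : Fin (2*s+1) × Fin (2*s+1) → V := fun p => φ (p.2, p.1)
      have hφ' : ∀ a b : Fin (2*s+1) × Fin (2*s+1),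
          G.dist (φ' a) (φ' b) = (((a.1:ℤ) - (b.1:ℤ)).natAbs + ((a.2:ℤ) - (b.2:ℤ)).natAbs) :=
        fun p q => (hφ (p.2,p.1) (q.2,q.1)).trans (Nat.add_comm _ _)
      have hinj' : Function.Injective φ' := by
        intro p q hpq
        have := hinj hpq
        exact Prod.ext (congrArg Prod.snd this) (congrArg Prod.fst this)
      have hcv' : φ' (finc s a.2.val, finc s a.1.val) = v := hcv
      exact case2_aux G s hs φ' hφ' hinj' u a.2.val a.1.val b.2.val b.1.val ha2 ha1 hb2 hb1
        (show φ (finc s b.1.val, finc s b.2.val) = u by rw [heta b]; exact hub)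
        (by tauto) (le_of_lt h)
        (fun p hp => hballc (p.2,p.1) (by rwa [hcv'] at hp))
  · push_neg at hur
    exact case1_aux G hG s hs φ hφ u a.1.val a.2.val ha1 ha2 hur
      (fun p hp => hballc p (by rwa [hcv] at hp))
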